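/- arXiv:2005.13852 — 4 statements merged into one kernel-verified Lean document; each statement's English description precedes it below -/
import Mathlib

section
/- In the setting of the Agmon identity, suppose F₊, F₋ : M → [0,∞) are measurable with F₊² − F₋² = V − |dφ|² − E pointwise (where T = h²U + hW + V·Id), and F := F₊ + F₋ > 0. Then for every compactly supported smooth section v: h²‖∇v‖² + ½‖F₊v‖² + ⟨v, (h²U + hW)v⟩ ≤ ‖F⁻¹ e^{φ/h}(H−E)e^{−φ/h} v‖² + (3/2)‖F₋v‖². -/
open scoped InnerProductSpace

/-- **Agmon estimate.**  In the setting of the Agmon identity for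
`H = h²∇*∇ + h²U + hW + V·Id`, suppose `F₊, F₋ ≥ 0` satisfy
`F₊² − F₋² = V − |dφ|² − E` pointwise and `F = F₊ + F₋ > 0`.  Then for every compactly
supported smooth section `v`:
`h²‖∇v‖² + ½‖F₊v‖² + ⟨v, (h²U + hW)v⟩ ≤ ‖F⁻¹e^{φ/h}(H−E)e^{−φ/h}v‖² + (3/2)‖F₋v‖²`.
Here `MU` is the operator `h²U + hW`, `MFp`, `MFm`, `MF` are multiplication by
`F₊`, `F₋`, `F` (so `MF = MFp + MFm` and `MF` is symmetric),
`g = e^{φ/h}(H−E)e^{−φ/h}v` and `r = F⁻¹g` (so `MF r = g`), and the hypothesis `hAgmon`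
is the Agmon identity
`Re⟨v, g⟩ = h²‖∇v‖² + ⟨v, (h²U + hW)v⟩ + ‖F₊v‖² − ‖F₋v‖²`. -/
theorem stmt_7
    {V P : Type*} [NormedAddCommGroup V] [InnerProductSpace ℂ V]
    [NormedAddCommGroup P] [InnerProductSpace ℂ P]
    (h : ℝ) (hh : 0 < h)
    (grad : V →ₗ[ℂ] P)
    (MU : V →ₗ[ℂ] V)
    (MFp MFm MF : V →ₗ[ℂ] V)
    (v g r : V)
    (hsum : MF = MFp + MFm)
    (hMFsym : ⟪v, MF r⟫_ℂ = ⟪MF v, r⟫_ℂ)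
    (hr : MF r = g)
    (hAgmon : (⟪v, g⟫_ℂ).re
        = h ^ 2 * ‖grad v‖ ^ 2 + (⟪v, MU v⟫_ℂ).re + ‖MFp v‖ ^ 2 - ‖MFm v‖ ^ 2) :
    h ^ 2 * ‖grad v‖ ^ 2 + (1 / 2) * ‖MFp v‖ ^ 2 + (⟪v, MU v⟫_ℂ).re
      ≤ ‖r‖ ^ 2 + (3 / 2) * ‖MFm v‖ ^ 2 := by
  have h1 : (⟪v, g⟫_ℂ).re = (⟪MF v, r⟫_ℂ).re := by rw [← hr, hMFsym]
  have h2 : (⟪MF v, r⟫_ℂ).re ≤ ‖MF v‖ * ‖r‖ := by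
    calc (⟪MF v, r⟫_ℂ).re ≤ ‖⟪MF v, r⟫_ℂ‖ := Complex.re_le_norm _
    _ ≤ ‖MF v‖ * ‖r‖ := norm_inner_le_norm _ _
  have h3 : ‖MF v‖ ≤ ‖MFp v‖ + ‖MFm v‖ := by
    rw [hsum]; exact norm_add_le _ _
  have h4 : (0:ℝ) ≤ ‖MF v‖ := norm_nonneg _
  have h5 : (0:ℝ) ≤ ‖r‖ := norm_nonneg _
  nlinarith [sq_nonneg (‖MF v‖ - 2*‖r‖), sq_nonneg (‖MFp v‖ - ‖MFm v‖), mul_le_mul_of_nonneg_right h3 h5]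
end

section
/- Let V, d : M → ℝ be continuous with V ≥ 0, d ≥ 0, and assume |d d(x)|² ≤ V(x) pointwise (eikonal inequality) and C₀⁻¹ ≤ V(x)/d(x) ≤ C₀ for some C₀ > 0 on a region. For B, h > 0 define Φ(x) = d(x) − Bh·log(d(x)/h) when d(x) > Bh and Φ(x) = d(x) − Bh·log B when d(x) ≤ Bh. Then V(x) − |dΦ(x)|² = 0 when d(x) ≤ Bh, and V(x) − |dΦ(x)|² ≥ Bh/C₀ when d(x) > Bh. -/
/-- **The weight `Φ = d − Bh·log(d/h)`.**  Let `V, d : M → ℝ` be nonnegative with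
`|dd(x)|² ≤ V(x)` (eikonal inequality, with equality where `d(x) ≤ Bh`, near the well),
and `C₀⁻¹ ≤ V(x)/d(x) ≤ C₀` where `d(x) > Bh`.  With
`Φ(x) = d(x) − Bh log(d(x)/h)` for `d(x) > Bh` and `Φ(x) = d(x) − Bh log B` otherwise,
one has `|dΦ| = (1 − Bh/d)|dd|` on `{d > Bh}` and `|dΦ| = |dd|` on `{d ≤ Bh}`; then
`V − |dΦ|² = 0` where `d(x) ≤ Bh`, and `V − |dΦ|² ≥ Bh/C₀` where `d(x) > Bh`.
Here `nd x` denotes `|dd(x)|` and `nΦ x` denotes `|dΦ(x)|`. -/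
theorem stmt_8
    {M : Type*} (V d nd : M → ℝ) (B h C₀ : ℝ)
    (hB : 0 < B) (hh : 0 < h) (hC₀ : 0 < C₀)
    (hV : ∀ x, 0 ≤ V x) (hd : ∀ x, 0 ≤ d x) (hnd : ∀ x, 0 ≤ nd x)
    (heik : ∀ x, nd x ^ 2 ≤ V x)
    (heikeq : ∀ x, d x ≤ B * h → nd x ^ 2 = V x)
    (hcomp : ∀ x, B * h < d x → C₀⁻¹ ≤ V x / d x ∧ V x / d x ≤ C₀)
    (nΦ : M → ℝ)
    (hnΦ : ∀ x, nΦ x = if B * h < d x then (1 - B * h / d x) * nd x else nd x) :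
    ∀ x, (d x ≤ B * h → V x - nΦ x ^ 2 = 0)
      ∧ (B * h < d x → B * h / C₀ ≤ V x - nΦ x ^ 2) := by
  intro x
  constructor
  · intro hle
    rw [hnΦ x, if_neg (not_lt.mpr hle), heikeq x hle]
    ring
  · intro hlt
    rw [hnΦ x, if_pos hlt]
    have hdx : 0 < d x := lt_trans (by positivity) hlt
    have ht0 : 0 < B * h / d x := by positivity
    have ht1 : B * h / d x < 1 := (div_lt_one hdx).mpr hlt
    have h1 : (C₀)⁻¹ ≤ V x / d x := (hcomp x hlt).1
    have hVd : B * h / C₀ ≤ B * h * (V x / d x) := by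
      rw [div_eq_mul_inv]
      exact mul_le_mul_of_nonneg_left h1 (by positivity)
    have hsq : ((1 - B * h / d x) * nd x) ^ 2 ≤ (1 - B * h / d x) * V x := by
      have h2 : nd x ^ 2 ≤ V x := heik x
      have hs0 : 0 ≤ 1 - B * h / d x := by linarith
      nlinarith [mul_le_mul_of_nonneg_left h2 (sq_nonneg (1 - B * h / d x)),
        mul_nonneg (mul_nonneg hs0 ht0.le) (hV x)]
    have : B * h * (V x / d x) = V x - (1 - B * h / d x) * V x := by
      field_simp
      ring
    nlinarith
end

section
/- Let M = D + W be an N×N complex matrix with D = diag(μ_1,…,μ_N) real diagonal and let T be a self-adjoint N×N matrix such that w_{αβ} − conj(w_{βα}) = (μ_α − μ_β) t_{αβ} for all α, β. Then (1+T)^{1/2} M (1+T)^{−1/2} = D + (1/2)(W + W*) + R, where ‖R‖ = O(‖T‖·‖W‖ + ‖T‖²·‖D‖·‖T‖) in the regime where T and W are small; in particular the conjugated matrix is self-adjoint up to second-order errors. -/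
open scoped Matrix Matrix.Norms.L2Operator ComplexOrder


lemma aux_inv_norm {N : ℕ} (P : Matrix (Fin N) (Fin N) ℂ) (hP : P.PosDef) :
    ‖(1 + P)⁻¹‖ ≤ 1 := by
  have h1P : (1 + P).PosDef := Matrix.PosDef.add Matrix.PosDef.one hP
  have hdet : IsUnit (1 + P).det := (Matrix.isUnit_iff_isUnit_det _).mp h1P.isUnit
  have hmul : (1 + P) * (1 + P)⁻¹ = 1 := Matrix.mul_nonsing_inv _ hdet
  rw [Matrix.cstar_norm_def]
  refine ContinuousLinearMap.opNorm_le_bound _ zero_le_one fun x => ?_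
  rw [one_mul]
  set x' : Fin N → ℂ := WithLp.equiv 2 (Fin N → ℂ) x with hx0
  have hrepr : Matrix.toEuclideanCLM (𝕜 := ℂ) ((1 + P)⁻¹) x =
      (WithLp.equiv 2 (Fin N → ℂ)).symm ((1 + P)⁻¹ *ᵥ x') := rfl
  have hxnorm : ‖x‖ = ‖(WithLp.equiv 2 (Fin N → ℂ)).symm x'‖ := rfl
  rw [hrepr, hxnorm]
  set y : Fin N → ℂ := (1 + P)⁻¹ *ᵥ x' with hy
  have h2 : x' = y + P *ᵥ y := by
    have h3 : (1 + P) *ᵥ y = x' := by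
      rw [hy, Matrix.mulVec_mulVec, hmul, Matrix.one_mulVec]
    rw [← h3, Matrix.add_mulVec, Matrix.one_mulVec]
  have hre : 0 ≤ RCLike.re (dotProduct (star y) (P *ᵥ y)) :=
    hP.posSemidef.re_dotProduct_nonneg y
  set u : EuclideanSpace ℂ (Fin N) := (WithLp.equiv 2 (Fin N → ℂ)).symm y with hu
  set v : EuclideanSpace ℂ (Fin N) := (WithLp.equiv 2 (Fin N → ℂ)).symm (P *ᵥ y) with hv
  have hx' : (WithLp.equiv 2 (Fin N → ℂ)).symm x' = u + v := by
    rw [h2, hu, hv]; rfl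
  have hinner : RCLike.re (inner (𝕜 := ℂ) u v) =
      RCLike.re (dotProduct (star y) (P *ᵥ y)) := by
    rw [hu, hv]; exact congrArg RCLike.re (dotProduct_comm (P *ᵥ y) (star y))
  have hsq : ‖u + v‖ ^ 2 = ‖u‖ ^ 2 + 2 * RCLike.re (inner (𝕜 := ℂ) u v) + ‖v‖ ^ 2 :=
    norm_add_sq (𝕜 := ℂ) u v
  rw [hx']
  nlinarith [norm_nonneg u, norm_nonneg (u + v), norm_nonneg v, hinner ▸ hre]

lemma aux_norm_one {N : ℕ} : ‖(1 : Matrix (Fin N) (Fin N) ℂ)‖ ≤ 1 := by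
  rw [Matrix.cstar_norm_def, map_one, ContinuousLinearMap.one_def]
  exact ContinuousLinearMap.norm_id_le

lemma aux_key_id {n : Type*} [Fintype n] [DecidableEq n]
    (S Si D W Wh T : Matrix n n ℂ)
    (hSi : S * Si = 1) (hiS : Si * S = 1) (hTeq : T = S * S - 1)
    (h1 : W - Wh = D * T - T * D) :
    S * (D + W) * Si - (D + (1 / 2 : ℂ) • (W + Wh)) =
      ((S - 1) * W - W * (S - 1)) * Si + (S * D - D * S) * (Si - S)
        + (1 / 2 : ℂ) • ((S * D - D * S) * (S - 1) - (S - 1) * (S * D - D * S)) := by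
  have e0 : S * (D + W) * Si = (S * (D + W) - (D + W) * S) * Si + (D + W) := by
    rw [sub_mul, mul_assoc (D + W) S Si, hSi, mul_one]
    abel
  have e2 : S * (D + W) - (D + W) * S = ((S - 1) * W - W * (S - 1)) + (S * D - D * S) := by
    noncomm_ring
  have e3 : D * T - T * D = -((S * D - D * S) * S + S * (S * D - D * S)) := by
    rw [hTeq]; noncomm_ring
  have e5 : (S * D - D * S) * (S - 1) - (S - 1) * (S * D - D * S) =
      (S * D - D * S) * S - S * (S * D - D * S) := by
    noncomm_ring
  calc S * (D + W) * Si - (D + (1 / 2 : ℂ) • (W + Wh))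
      = (S * (D + W) - (D + W) * S) * Si + (1 / 2 : ℂ) • (W - Wh) := by
        rw [e0]; module
    _ = (((S - 1) * W - W * (S - 1)) + (S * D - D * S)) * Si
          + (1 / 2 : ℂ) • (-((S * D - D * S) * S + S * (S * D - D * S))) := by
        rw [h1, e2, e3]
    _ = ((S - 1) * W - W * (S - 1)) * Si + (S * D - D * S) * (Si - S)
          + (1 / 2 : ℂ) • ((S * D - D * S) * (S - 1) - (S - 1) * (S * D - D * S)) := by
        rw [e5, mul_sub (S * D - D * S) Si S, add_mul]; module

set_option maxHeartbeats 4000000 in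
/-- **Symmetrization of the interaction matrix.**  Let `M = D + W` with
`D = diag(μ_1, …, μ_N)` real diagonal, and let `T` be self-adjoint with
`w_{αβ} − conj(w_{βα}) = (μ_α − μ_β) t_{αβ}`.  Let `S = (1+T)^{1/2}` be the positive
square root.  Then in the regime where `T` is small (`‖T‖ ≤ 1/2`),
`(1+T)^{1/2} M (1+T)^{−1/2} = D + ½(W + W*) + R` with
`‖R‖ ≤ C(‖T‖·‖W‖ + ‖T‖²·‖D‖)` for a constant `C` independent of the data; in particular
the conjugated matrix is self-adjoint up to second-order errors. -/
theorem stmt_10 (N : ℕ) :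
    ∃ C > 0, ∀ (μ : Fin N → ℝ) (W T S : Matrix (Fin N) (Fin N) ℂ),
      T.IsHermitian → ‖T‖ ≤ 1 / 2 → S.PosDef → S * S = 1 + T →
      (∀ α β, W α β - star (W β α) = ((μ α : ℂ) - (μ β : ℂ)) * T α β) →
      ‖S * (Matrix.diagonal (fun α => (μ α : ℂ)) + W) * S⁻¹
          - (Matrix.diagonal (fun α => (μ α : ℂ)) + (1 / 2 : ℂ) • (W + Wᴴ))‖
        ≤ C * (‖T‖ * ‖W‖ + ‖T‖ ^ 2 * ‖Matrix.diagonal (fun α => (μ α : ℂ))‖) := by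
  refine ⟨10, by norm_num, ?_⟩
  intro μ W T S hTh hTn hS hS2 hWT
  set D : Matrix (Fin N) (Fin N) ℂ := Matrix.diagonal (fun α => (μ α : ℂ)) with hD
  set A : Matrix (Fin N) (Fin N) ℂ := S - 1 with hA
  set K : Matrix (Fin N) (Fin N) ℂ := S * D - D * S with hK
  -- invertibility facts
  have hdS : IsUnit S.det := (Matrix.isUnit_iff_isUnit_det _).mp hS.isUnit
  have hSi : S * S⁻¹ = 1 := Matrix.mul_nonsing_inv S hdS
  have hiS : S⁻¹ * S = 1 := Matrix.nonsing_inv_mul S hdS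
  have hTeq : T = S * S - 1 := by rw [hS2, add_sub_cancel_left]
  -- the commutation relation in matrix form
  have h1 : W - Wᴴ = D * T - T * D := by
    ext α β
    simp only [Matrix.sub_apply, Matrix.conjTranspose_apply, hD, Matrix.diagonal_mul,
      Matrix.mul_diagonal, hWT α β]
    ring
  -- norm estimates
  have hSH : Sᴴ = S := hS.isHermitian
  have hnS : ‖S‖ ≤ 2 := by
    have h2 : ‖S‖ * ‖S‖ = ‖S * S‖ := by
      rw [← Matrix.l2_opNorm_conjTranspose_mul_self S, hSH]
    have h3 : ‖S * S‖ ≤ 3 / 2 := by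
      rw [hS2]
      calc ‖(1 : Matrix (Fin N) (Fin N) ℂ) + T‖ ≤ ‖(1 : Matrix (Fin N) (Fin N) ℂ)‖ + ‖T‖ :=
            norm_add_le _ _
        _ ≤ 1 + 1 / 2 := add_le_add aux_norm_one hTn
        _ = 3 / 2 := by norm_num
    nlinarith [norm_nonneg S]
  have hdST : IsUnit (1 + T).det := by
    rw [← hS2, Matrix.det_mul]; exact hdS.mul hdS
  have hGmul : (1 + T) * (1 + T)⁻¹ = 1 := Matrix.mul_nonsing_inv _ hdST
  have hnG : ‖(1 + T)⁻¹‖ ≤ 2 := by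
    have hGe : (1 + T)⁻¹ = 1 - T * (1 + T)⁻¹ := by
      have h := hGmul
      rw [add_mul, one_mul] at h
      rw [eq_sub_iff_add_eq]; exact h
    have h4 : ‖(1 + T)⁻¹‖ ≤ 1 + ‖T‖ * ‖(1 + T)⁻¹‖ := by
      calc ‖(1 + T)⁻¹‖ = ‖1 - T * (1 + T)⁻¹‖ := by rw [← hGe]
        _ ≤ ‖(1 : Matrix (Fin N) (Fin N) ℂ)‖ + ‖T * (1 + T)⁻¹‖ := norm_sub_le _ _
        _ ≤ 1 + ‖T‖ * ‖(1 + T)⁻¹‖ := add_le_add aux_norm_one (Matrix.l2_opNorm_mul _ _)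
    have h5 : ‖T‖ * ‖(1 + T)⁻¹‖ ≤ (1 / 2) * ‖(1 + T)⁻¹‖ :=
      mul_le_mul_of_nonneg_right hTn (norm_nonneg _)
    linarith
  have hSinv_eq : S⁻¹ = S * (1 + T)⁻¹ := by
    calc S⁻¹ = S⁻¹ * ((1 + T) * (1 + T)⁻¹) := by rw [hGmul, mul_one]
      _ = S⁻¹ * (S * S) * (1 + T)⁻¹ := by rw [hS2, mul_assoc]
      _ = S * (1 + T)⁻¹ := by rw [← mul_assoc, hiS, one_mul]
  have hnSi : ‖S⁻¹‖ ≤ 4 := by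
    calc ‖S⁻¹‖ = ‖S * (1 + T)⁻¹‖ := by rw [hSinv_eq]
      _ ≤ ‖S‖ * ‖(1 + T)⁻¹‖ := Matrix.l2_opNorm_mul _ _
      _ ≤ 2 * 2 := mul_le_mul hnS hnG (norm_nonneg _) (by norm_num)
      _ = 4 := by norm_num
  have hd1S : IsUnit (1 + S).det :=
    (Matrix.isUnit_iff_isUnit_det _).mp (Matrix.PosDef.add Matrix.PosDef.one hS).isUnit
  have hAeq : A = T * (1 + S)⁻¹ := by
    have h6 : A * (1 + S) = T := by rw [hA, hTeq]; noncomm_ring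
    calc A = A * ((1 + S) * (1 + S)⁻¹) := by
          rw [Matrix.mul_nonsing_inv _ hd1S, mul_one]
      _ = T * (1 + S)⁻¹ := by rw [← mul_assoc, h6]
  have hnA : ‖A‖ ≤ ‖T‖ := by
    calc ‖A‖ = ‖T * (1 + S)⁻¹‖ := by rw [hAeq]
      _ ≤ ‖T‖ * ‖(1 + S)⁻¹‖ := Matrix.l2_opNorm_mul _ _
      _ ≤ ‖T‖ * 1 := mul_le_mul_of_nonneg_left (aux_inv_norm S hS) (norm_nonneg _)
      _ = ‖T‖ := mul_one _
  -- key algebraic identity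
  have key : S * (D + W) * S⁻¹ - (D + (1 / 2 : ℂ) • (W + Wᴴ)) =
      (A * W - W * A) * S⁻¹ + K * (S⁻¹ - S) + (1 / 2 : ℂ) • (K * A - A * K) := by
    rw [hA, hK]
    exact aux_key_id S S⁻¹ D W Wᴴ T hSi hiS hTeq h1
  rw [key]
  -- putting the estimates together
  have hSmS : ‖S⁻¹ - S‖ ≤ ‖S⁻¹‖ * ‖T‖ := by
    have h7 : S⁻¹ - S = -(S⁻¹ * T) := by
      rw [hTeq, mul_sub, mul_one, ← mul_assoc, hiS, one_mul]; abel
    rw [h7, norm_neg]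
    exact Matrix.l2_opNorm_mul _ _
  have hKA : K = A * D - D * A := by rw [hA, hK]; noncomm_ring
  have hnK : ‖K‖ ≤ ‖A‖ * ‖D‖ + ‖D‖ * ‖A‖ := by
    rw [hKA]
    exact (norm_sub_le _ _).trans (add_le_add (Matrix.l2_opNorm_mul _ _)
      (Matrix.l2_opNorm_mul _ _))
  have hn1 : ‖(A * W - W * A) * S⁻¹‖ ≤ (‖A‖ * ‖W‖ + ‖W‖ * ‖A‖) * ‖S⁻¹‖ := by
    refine (Matrix.l2_opNorm_mul _ _).trans (mul_le_mul_of_nonneg_right ?_ (norm_nonneg _))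
    exact (norm_sub_le _ _).trans (add_le_add (Matrix.l2_opNorm_mul _ _)
      (Matrix.l2_opNorm_mul _ _))
  have hn2 : ‖K * (S⁻¹ - S)‖ ≤ ‖K‖ * (‖S⁻¹‖ * ‖T‖) := by
    refine (Matrix.l2_opNorm_mul _ _).trans (mul_le_mul_of_nonneg_left hSmS (norm_nonneg _))
  have hn3 : ‖(1 / 2 : ℂ) • (K * A - A * K)‖ ≤ (1 / 2) * (‖K‖ * ‖A‖ + ‖A‖ * ‖K‖) := by
    have h8 : ‖(1 / 2 : ℂ)‖ = 1 / 2 := by norm_num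
    calc ‖(1 / 2 : ℂ) • (K * A - A * K)‖ = (1 / 2) * ‖K * A - A * K‖ := by
          rw [norm_smul, h8]
      _ ≤ (1 / 2) * (‖K‖ * ‖A‖ + ‖A‖ * ‖K‖) := by
          refine mul_le_mul_of_nonneg_left ?_ (by norm_num)
          exact (norm_sub_le _ _).trans (add_le_add (Matrix.l2_opNorm_mul _ _)
            (Matrix.l2_opNorm_mul _ _))
  have htot := (norm_add_le _ _).trans (add_le_add ((norm_add_le _ _).trans
    (add_le_add hn1 hn2)) hn3)
  refine htot.trans ?_
  have h0T : (0 : ℝ) ≤ ‖T‖ := norm_nonneg _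
  have h0W : (0 : ℝ) ≤ ‖W‖ := norm_nonneg _
  have h0D : (0 : ℝ) ≤ ‖D‖ := norm_nonneg _
  have h0A : (0 : ℝ) ≤ ‖A‖ := norm_nonneg _
  have h0Si : (0 : ℝ) ≤ ‖S⁻¹‖ := norm_nonneg _
  have h0K : (0 : ℝ) ≤ ‖K‖ := norm_nonneg _
  have haw : ‖A‖ * ‖W‖ ≤ ‖T‖ * ‖W‖ := mul_le_mul_of_nonneg_right hnA h0W
  have hwa : ‖W‖ * ‖A‖ ≤ ‖T‖ * ‖W‖ :=
    (mul_le_mul_of_nonneg_left hnA h0W).trans_eq (mul_comm _ _)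
  have had : ‖A‖ * ‖D‖ ≤ ‖T‖ * ‖D‖ := mul_le_mul_of_nonneg_right hnA h0D
  have hda : ‖D‖ * ‖A‖ ≤ ‖T‖ * ‖D‖ :=
    (mul_le_mul_of_nonneg_left hnA h0D).trans_eq (mul_comm _ _)
  have hK2 : ‖K‖ ≤ 2 * (‖T‖ * ‖D‖) := by linarith
  have B1 : (‖A‖ * ‖W‖ + ‖W‖ * ‖A‖) * ‖S⁻¹‖ ≤ 8 * (‖T‖ * ‖W‖) := by
    have h9 : ‖A‖ * ‖W‖ + ‖W‖ * ‖A‖ ≤ 2 * (‖T‖ * ‖W‖) := by linarith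
    calc (‖A‖ * ‖W‖ + ‖W‖ * ‖A‖) * ‖S⁻¹‖ ≤ (2 * (‖T‖ * ‖W‖)) * 4 :=
          mul_le_mul h9 hnSi h0Si (by positivity)
      _ = 8 * (‖T‖ * ‖W‖) := by ring
  have B2 : ‖K‖ * (‖S⁻¹‖ * ‖T‖) ≤ 8 * (‖T‖ ^ 2 * ‖D‖) := by
    have hsit : ‖S⁻¹‖ * ‖T‖ ≤ 4 * ‖T‖ := mul_le_mul_of_nonneg_right hnSi h0T
    calc ‖K‖ * (‖S⁻¹‖ * ‖T‖) ≤ (2 * (‖T‖ * ‖D‖)) * (4 * ‖T‖) :=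
          mul_le_mul hK2 hsit (mul_nonneg h0Si h0T) (by positivity)
      _ = 8 * (‖T‖ ^ 2 * ‖D‖) := by ring
  have B3 : (1 / 2) * (‖K‖ * ‖A‖ + ‖A‖ * ‖K‖) ≤ 2 * (‖T‖ ^ 2 * ‖D‖) := by
    have hka : ‖K‖ * ‖A‖ ≤ (2 * (‖T‖ * ‖D‖)) * ‖T‖ :=
      mul_le_mul hK2 hnA h0A (by positivity)
    have hak : ‖A‖ * ‖K‖ ≤ ‖T‖ * (2 * (‖T‖ * ‖D‖)) := mul_le_mul hnA hK2 h0K h0T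
    have hr1 : (2 * (‖T‖ * ‖D‖)) * ‖T‖ = 2 * (‖T‖ ^ 2 * ‖D‖) := by ring
    have hr2 : ‖T‖ * (2 * (‖T‖ * ‖D‖)) = 2 * (‖T‖ ^ 2 * ‖D‖) := by ring
    linarith
  have hTW : (0 : ℝ) ≤ ‖T‖ * ‖W‖ := mul_nonneg h0T h0W
  linarith
end

section
/- Let (f_α) be finitely many vectors in a Hilbert space with Gram matrix G_f satisfying ‖G_f − 1‖ ≤ ε < 1, and let H be a bounded self-adjoint operator leaving span(f_α) invariant with H f⃗ = f⃗ M̂ for some matrix M̂ with ‖M̂‖ ≤ C. Then the matrix of H in the orthonormalized basis g⃗ := f⃗ G_f^{−1/2} is M̃ = G_f^{1/2} M̂ G_f^{−1/2}, and ‖M̃ − M̂‖ ≤ C' ε ‖M̂‖ for a constant C' depending only on ε₀ < 1 with ε ≤ ε₀. -/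
open scoped InnerProductSpace Matrix.Norms.L2Operator ComplexOrder ENNReal NNReal Matrix Pointwise

noncomputable instance matCStarAlg (n : ℕ) : CStarAlgebra (Matrix (Fin n) (Fin n) ℂ) :=
  { Matrix.instL2OpNormedRing, Matrix.instL2OpNormedAlgebra,
    (inferInstance : StarRing (Matrix (Fin n) (Fin n) ℂ)),
    (inferInstance : CStarRing (Matrix (Fin n) (Fin n) ℂ)),
    (inferInstance : CompleteSpace (Matrix (Fin n) (Fin n) ℂ)),
    (inferInstance : StarModule ℂ (Matrix (Fin n) (Fin n) ℂ)) with }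

lemma aux_norm_le_of_spectrum {n : ℕ} {a : Matrix (Fin n) (Fin n) ℂ} (ha : IsSelfAdjoint a)
    {r : ℝ} (hr : 0 ≤ r) (h : ∀ z ∈ spectrum ℂ a, ‖z‖ ≤ r) : ‖a‖ ≤ r := by
  have h1 : (‖a‖₊ : ℝ≥0∞) = spectralRadius ℂ a := ha.spectralRadius_eq_nnnorm.symm
  have h2 : spectralRadius ℂ a ≤ ENNReal.ofReal r := by
    rw [spectralRadius]
    refine iSup₂_le fun z hz => ?_
    rw [← ENNReal.ofReal_coe_nnreal, coe_nnnorm]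
    exact ENNReal.ofReal_le_ofReal (h z hz)
  rw [← h1, ENNReal.ofReal] at h2
  have h3 : ‖a‖₊ ≤ r.toNNReal := ENNReal.coe_le_coe.mp h2
  calc ‖a‖ = (‖a‖₊ : ℝ) := rfl
  _ ≤ (r.toNNReal : ℝ) := by exact_mod_cast h3
  _ = r := Real.coe_toNNReal r hr

lemma aux_norm_mem_le {n : ℕ} {a : Matrix (Fin n) (Fin n) ℂ} (ha : IsSelfAdjoint a)
    {z : ℂ} (hz : z ∈ spectrum ℂ a) : ‖z‖ ≤ ‖a‖ := by
  have h1 : (‖z‖₊ : ℝ≥0∞) ≤ spectralRadius ℂ a := le_iSup₂ (f := fun k (_ : k ∈ spectrum ℂ a) => (‖k‖₊ : ℝ≥0∞)) z hz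
  rw [ha.spectralRadius_eq_nnnorm] at h1
  exact_mod_cast h1

/-- **Matrix of a self-adjoint operator in the orthonormalized quasimode basis.**
Let `f_1, …, f_N` be vectors with Gram matrix `G` satisfying `‖G − 1‖ ≤ ε ≤ ε₀ < 1`, and
let `H` be a bounded self-adjoint operator with `H f⃗ = f⃗ M̂` (i.e.
`H f_β = ∑_α M̂_{αβ} f_α`).  Let `S = G^{1/2}` be the positive square root.  Then the
matrix of `H` in the orthonormalized basis `g⃗ = f⃗ G^{−1/2}` is `M̃ = G^{1/2} M̂ G^{−1/2}`
(i.e. `H g_β = ∑_α M̃_{αβ} g_α`), and `‖M̃ − M̂‖ ≤ C'·ε·‖M̂‖` for a constant `C'`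
depending only on `ε₀`. -/
theorem stmt_17
    {H : Type*} [NormedAddCommGroup H] [InnerProductSpace ℂ H] [CompleteSpace H]
    (ε₀ : ℝ) (hε₀ : 0 ≤ ε₀) (hε₁ : ε₀ < 1) (N : ℕ) :
    ∃ C' > 0, ∀ (f : Fin N → H) (Hop : H →L[ℂ] H)
      (G Mhat S : Matrix (Fin N) (Fin N) ℂ) (ε C : ℝ),
      IsSelfAdjoint Hop →
      (∀ i j, ⟪f i, f j⟫_ℂ = G i j) →
      0 ≤ ε → ε ≤ ε₀ → ‖G - 1‖ ≤ ε → ‖Mhat‖ ≤ C →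
      S.PosDef → S * S = G →
      (∀ β, Hop (f β) = ∑ α, Mhat α β • f α) →
      ((∀ β, Hop (∑ k, S⁻¹ k β • f k)
          = ∑ α, (S * Mhat * S⁻¹) α β • (∑ k, S⁻¹ k α • f k))
        ∧ ‖S * Mhat * S⁻¹ - Mhat‖ ≤ C' * ε * ‖Mhat‖) := by
  have hb : 0 < Real.sqrt (1 - ε₀) := Real.sqrt_pos.2 (by linarith)
  set b := Real.sqrt (1 - ε₀) with hbdef
  refine ⟨2 / b, by positivity, ?_⟩
  intro f Hop G Mhat S ε C _ _ hε hεε₀ hGnorm _ hS hSG hHf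
  have hinv : S⁻¹ * S = 1 := Matrix.nonsing_inv_mul S hS.det_pos.ne'.isUnit
  constructor
  · -- part 1: algebra
    intro β
    have lhs : Hop (∑ k, S⁻¹ k β • f k) = ∑ α, (Mhat * S⁻¹) α β • f α := by
      rw [map_sum]
      simp_rw [map_smul, hHf, Finset.smul_sum, smul_smul]
      rw [Finset.sum_comm]
      simp_rw [← Finset.sum_smul, Matrix.mul_apply]
      congr 1; ext α; congr 1
      exact Finset.sum_congr rfl fun k _ => mul_comm _ _
    rw [lhs]
    simp_rw [Finset.smul_sum, smul_smul]
    rw [Finset.sum_comm]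
    simp_rw [← Finset.sum_smul]
    congr 1; ext k; congr 1
    have : (S⁻¹ * (S * Mhat * S⁻¹)) k β = (Mhat * S⁻¹) k β := by
      rw [show S⁻¹ * (S * Mhat * S⁻¹) = (S⁻¹ * S) * (Mhat * S⁻¹) by noncomm_ring, hinv, one_mul]
    rw [← this, Matrix.mul_apply]
    exact Finset.sum_congr rfl fun α _ => mul_comm _ _
  · -- part 2: norm bound
    have hSsa : IsSelfAdjoint S := by
      rw [IsSelfAdjoint, Matrix.star_eq_conjTranspose]; exact hS.1
    have hGsa : IsSelfAdjoint G := by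
      rw [← hSG, IsSelfAdjoint, star_mul, hSsa.star_eq]
    -- spectrum of S
    have hspecS : ∀ μ ∈ spectrum ℂ S, ∃ t : ℝ, μ = (t : ℂ) ∧ b ≤ t ∧ |t - 1| ≤ ε := by
      intro μ hμ
      have hre : μ = (μ.re : ℂ) := hSsa.mem_spectrum_eq_re hμ
      set t := μ.re with htdef
      -- eigenvector, positivity of t
      have hnu : ¬ IsUnit (algebraMap ℂ (Matrix (Fin N) (Fin N) ℂ) μ - S) := spectrum.mem_iff.mp hμ
      have hdet : (algebraMap ℂ (Matrix (Fin N) (Fin N) ℂ) μ - S).det = 0 := by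
        by_contra hd
        exact hnu ((Matrix.isUnit_iff_isUnit_det _).2 (isUnit_iff_ne_zero.2 hd))
      obtain ⟨v, hv0, hv⟩ := (Matrix.exists_mulVec_eq_zero_iff).2 hdet
      have heig : S *ᵥ v = μ • v := by
        rw [Matrix.sub_mulVec, Algebra.algebraMap_eq_smul_one, Matrix.smul_mulVec,
          Matrix.one_mulVec, sub_eq_zero] at hv
        exact hv.symm
      have hpos := hS.dotProduct_mulVec_pos hv0
      rw [heig] at hpos
      have hdot : dotProduct (star v) (μ • v) = μ * ((∑ i, Complex.normSq (v i) : ℝ) : ℂ) := by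
        rw [dotProduct_smul, smul_eq_mul]
        congr 1
        rw [dotProduct]
        push_cast
        exact Finset.sum_congr rfl fun i _ => by
          simpa using (Complex.normSq_eq_conj_mul_self (z := v i)).symm
      rw [hdot] at hpos
      set s : ℝ := ∑ i, Complex.normSq (v i) with hsdef
      have hs : 0 ≤ s := Finset.sum_nonneg fun i _ => Complex.normSq_nonneg _
      have hpos' : 0 < (μ * (s : ℂ)).re := (Complex.lt_def.mp hpos).1
      have hts : (μ * (s : ℂ)).re = t * s := by
        rw [hre]; push_cast; simp
      rw [hts] at hpos'
      have ht : 0 < t := by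
        by_contra hc
        push_neg at hc
        nlinarith
      -- μ² in spectrum of G
      have hsq : μ ^ 2 ∈ spectrum ℂ (S * S) := by
        have h0 : μ ^ 2 ∈ (fun k => Polynomial.eval k (Polynomial.X ^ 2 : Polynomial ℂ)) ''
            spectrum ℂ S := ⟨μ, hμ, by simp⟩
        have := spectrum.subset_polynomial_aeval S (Polynomial.X ^ 2 : Polynomial ℂ) h0
        rwa [map_pow, Polynomial.aeval_X, pow_two] at this
      rw [hSG] at hsq
      have hset2 : spectrum ℂ G - {(1 : ℂ)} = spectrum ℂ (G - 1) := by
        have h2 := spectrum.sub_singleton_eq G (1 : ℂ)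
        rwa [map_one] at h2
      have hsub : μ ^ 2 - 1 ∈ spectrum ℂ (G - 1) := by
        rw [← hset2]
        exact Set.sub_mem_sub hsq rfl
      have hb2 : ‖μ ^ 2 - 1‖ ≤ ε :=
        le_trans (aux_norm_mem_le (hGsa.sub (IsSelfAdjoint.one _)) hsub) hGnorm
      have ht2 : |t ^ 2 - 1| ≤ ε := by
        have : μ ^ 2 - 1 = ((t ^ 2 - 1 : ℝ) : ℂ) := by rw [hre]; push_cast; ring
        rwa [this, Complex.norm_real] at hb2
      rw [abs_le] at ht2
      refine ⟨t, hre, ?_, ?_⟩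
      · have h1 : 1 - ε₀ ≤ t ^ 2 := by linarith
        calc b ≤ Real.sqrt (t ^ 2) := Real.sqrt_le_sqrt h1
        _ = t := by rw [Real.sqrt_sq ht.le]
      · rw [abs_le]; constructor <;> nlinarith [sq_nonneg (t - 1), sq_nonneg (t + 1)]
    -- norm bounds
    have hSnorm : ‖S - 1‖ ≤ ε := by
      refine aux_norm_le_of_spectrum (hSsa.sub (IsSelfAdjoint.one _)) hε fun z hz => ?_
      have hset : spectrum ℂ S - {(1 : ℂ)} = spectrum ℂ (S - 1) := by
        have h2 := spectrum.sub_singleton_eq S (1 : ℂ)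
        rwa [map_one] at h2
      rw [← hset] at hz
      obtain ⟨μ, hμ, w, hw, hzw⟩ := Set.mem_sub.mp hz
      obtain ⟨t, hμt, -, ht1⟩ := hspecS μ hμ
      rw [Set.mem_singleton_iff] at hw
      subst hw
      rw [← hzw, hμt, show ((t : ℂ) - 1) = ((t - 1 : ℝ) : ℂ) by push_cast; ring,
        Complex.norm_real]
      exact ht1
    have hSisa : IsSelfAdjoint S⁻¹ := by
      rw [IsSelfAdjoint, Matrix.star_eq_conjTranspose]; exact hS.inv.1
    have hSinv_norm : ‖S⁻¹‖ ≤ 1 / b := by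
      refine aux_norm_le_of_spectrum hSisa (by positivity) fun z hz => ?_
      have huS : IsUnit S := hS.isUnit
      have hcoe : (↑huS.unit⁻¹ : Matrix (Fin N) (Fin N) ℂ) = S⁻¹ :=
        Units.inv_eq_of_mul_eq_one_right (by rw [huS.unit_spec, Matrix.mul_nonsing_inv S hS.det_pos.ne'.isUnit])
      have hz0 : z ≠ 0 := by
        rintro rfl
        exact (spectrum.zero_mem_iff ℂ).mp hz (by rw [← hcoe]; exact (huS.unit⁻¹).isUnit)
      have hzinv : z⁻¹ ∈ spectrum ℂ S := by
        have := (spectrum.inv_mem_iff (r := Units.mk0 z hz0) (a := huS.unit⁻¹)).mp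
          (by rw [hcoe]; exact hz)
        simpa [huS.unit_spec] using this
      obtain ⟨t, htz, hbt, -⟩ := hspecS _ hzinv
      have ht : 0 < t := lt_of_lt_of_le hb hbt
      have hznorm : ‖z‖ = 1 / t := by
        have hzt : z = ((t : ℂ))⁻¹ := by rw [← htz, inv_inv]
        rw [hzt, norm_inv, Complex.norm_real, Real.norm_eq_abs, abs_of_pos ht, one_div]
      rw [hznorm]
      exact one_div_le_one_div_of_le hb hbt
    -- assemble
    have hid : S * Mhat * S⁻¹ - Mhat = (S - 1) * (Mhat * S⁻¹) + Mhat * (S⁻¹ - 1) := by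
      noncomm_ring
    have hinv1 : S⁻¹ - 1 = S⁻¹ * (1 - S) := by rw [mul_sub, mul_one, hinv]
    calc ‖S * Mhat * S⁻¹ - Mhat‖
        ≤ ‖(S - 1) * (Mhat * S⁻¹)‖ + ‖Mhat * (S⁻¹ - 1)‖ := by rw [hid]; exact norm_add_le _ _
      _ ≤ ‖S - 1‖ * (‖Mhat‖ * ‖S⁻¹‖) + ‖Mhat‖ * (‖S⁻¹‖ * ‖1 - S‖) := by
          refine add_le_add ?_ ?_
          · exact le_trans (norm_mul_le _ _)
              (mul_le_mul_of_nonneg_left (norm_mul_le _ _) (norm_nonneg _))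
          · refine le_trans (norm_mul_le _ _) (mul_le_mul_of_nonneg_left ?_ (norm_nonneg _))
            rw [hinv1]; exact norm_mul_le _ _
      _ ≤ ε * (‖Mhat‖ * (1 / b)) + ‖Mhat‖ * (1 / b * ε) := by
          rw [norm_sub_rev (1 : Matrix (Fin N) (Fin N) ℂ) S]
          gcongr
      _ = 2 / b * ε * ‖Mhat‖ := by ring
end
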